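/- Let a ≤ b be integers and let ℐ be a nonempty set of discrete intervals contained in [a,b] whose interval graph is connected, such that a belongs to some member of ℐ and b belongs to some member of ℐ. Then there exists a subset ℐ' ⊆ ℐ whose interval graph is connected and such that every integer of [a,b] is contained in exactly one or exactly two members of ℐ'. -/

import Mathlib

/-- The interval graph of a family `ℐ` of discrete intervals (an interval is encoded as a
pair `I : ℤ × ℤ` representing `Set.Icc I.1 I.2`): two intervals are adjacent iff they are
distinct and intersect. -/
def intervalGraph (ℐ : Set (ℤ × ℤ)) : SimpleGraph ℐ :=
  SimpleGraph.fromRel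
    (fun I J => (Set.Icc I.1.1 I.1.2 ∩ Set.Icc J.1.1 J.1.2).Nonempty)

namespace IGAux

/-- `Rest ℐ b t I L`: `L` is a valid continuation of a chain whose last interval is `I`,
where `t` is the right endpoint of the interval before `I` (or `a` at the start). -/
def Rest (ℐ : Set (ℤ × ℤ)) (b : ℤ) : ℤ → ℤ × ℤ → List (ℤ × ℤ) → Prop
  | _, I, [] => b ≤ I.2
  | t, I, J :: L => J ∈ ℐ ∧ t < J.1 ∧ J.1 ≤ I.2 ∧ I.2 < J.2 ∧ Rest ℐ b I.2 J L

variable {ℐ : Set (ℤ × ℤ)} {b : ℤ}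

lemma rest_mem (L : List (ℤ × ℤ)) : ∀ (t : ℤ) (I : ℤ × ℤ), Rest ℐ b t I L →
    ∀ J ∈ L, J ∈ ℐ := by
  induction L with
  | nil => intro t I _ J hJ; simp at hJ
  | cons K L ih =>
    intro t I hR J hJ
    obtain ⟨h1, _, _, _, h5⟩ := hR
    rcases List.mem_cons.1 hJ with h | h
    · exact h ▸ h1
    · exact ih _ _ h5 J h

lemma rest_lt (L : List (ℤ × ℤ)) : ∀ (t : ℤ) (I : ℤ × ℤ), Rest ℐ b t I L → t ≤ I.2 →
    ∀ J ∈ L, I.2 < J.2 ∧ t < J.1 := by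
  induction L with
  | nil => intro t I _ _ J hJ; simp at hJ
  | cons K L ih =>
    intro t I hR ht J hJ
    obtain ⟨_, h2, h3, h4, h5⟩ := hR
    rcases List.mem_cons.1 hJ with h | h
    · exact h ▸ ⟨h4, h2⟩
    · obtain ⟨hl, hr⟩ := ih _ _ h5 h4.le J h
      exact ⟨h4.trans hl, lt_of_le_of_lt ht hr⟩

/-- A point `k ≤ I.2` lies in at most one member of the continuation `L`. -/
lemma rest_one (L : List (ℤ × ℤ)) (t : ℤ) (I : ℤ × ℤ) (hR : Rest ℐ b t I L)
    {k : ℤ} (hk : k ≤ I.2) :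
    ∀ J ∈ L, ∀ K ∈ L, J.1 ≤ k → k ≤ J.2 → K.1 ≤ k → k ≤ K.2 → J = K := by
  intro J hJ K hK hJ1 _ hK1 _
  match L, hR with
  | M :: L', ⟨_, _, _, h4, h5⟩ =>
    rcases List.mem_cons.1 hJ with h | h
    · rcases List.mem_cons.1 hK with h' | h'
      · exact h.trans h'.symm
      · exact absurd hK1 (by have := (rest_lt L' _ _ h5 h4.le K h').2; omega)
    · exact absurd hJ1 (by have := (rest_lt L' _ _ h5 h4.le J h).2; omega)

/-- Any point lies in at most two members of the chain `I :: L`. -/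
lemma rest_three (L : List (ℤ × ℤ)) : ∀ (t : ℤ) (I : ℤ × ℤ), Rest ℐ b t I L →
    ∀ (k : ℤ) (J K M : ℤ × ℤ), J ∈ I :: L → K ∈ I :: L → M ∈ I :: L →
    J.1 ≤ k → k ≤ J.2 → K.1 ≤ k → k ≤ K.2 → M.1 ≤ k → k ≤ M.2 →
    J = K ∨ J = M ∨ K = M := by
  induction L with
  | nil =>
    intro t I _ k J K M hJ hK hM _ _ _ _ _ _
    simp only [List.mem_cons, List.not_mem_nil, or_false] at hJ hK hM
    exact Or.inl (hJ.trans hK.symm)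
  | cons N L ih =>
    intro t I hR k J K M hJ hK hM hJ1 hJ2 hK1 hK2 hM1 hM2
    obtain ⟨h1, h2, h3, h4, h5⟩ := hR
    have hR : Rest ℐ b t I (N :: L) := ⟨h1, h2, h3, h4, h5⟩
    rcases List.mem_cons.1 hJ with hJ' | hJ'
    · rcases List.mem_cons.1 hK with hK' | hK'
      · exact Or.inl (hJ'.trans hK'.symm)
      · rcases List.mem_cons.1 hM with hM' | hM'
        · exact Or.inr (Or.inl (hJ'.trans hM'.symm))
        · -- K, M in the tail, k ≤ I.2 since k ∈ J = I
          exact Or.inr (Or.inr (rest_one _ _ _ hR (hJ' ▸ hJ2) K hK' M hM' hK1 hK2 hM1 hM2))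
    · rcases List.mem_cons.1 hK with hK' | hK'
      · rcases List.mem_cons.1 hM with hM' | hM'
        · exact Or.inr (Or.inr (hK'.trans hM'.symm))
        · exact Or.inr (Or.inl (rest_one _ _ _ hR (hK' ▸ hK2) J hJ' M hM' hJ1 hJ2 hM1 hM2))
      · rcases List.mem_cons.1 hM with hM' | hM'
        · exact Or.inl (rest_one _ _ _ hR (hM' ▸ hM2) J hJ' K hK' hJ1 hJ2 hK1 hK2)
        · exact ih _ _ h5 k J K M hJ' hK' hM' hJ1 hJ2 hK1 hK2 hM1 hM2

/-- Coverage of all points beyond `I.2` up to `b`. -/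
lemma rest_cover (L : List (ℤ × ℤ)) : ∀ (t : ℤ) (I : ℤ × ℤ), Rest ℐ b t I L →
    ∀ k : ℤ, I.2 < k → k ≤ b → ∃ J ∈ L, J.1 ≤ k ∧ k ≤ J.2 := by
  induction L with
  | nil => intro t I hR k h1 h2; exact absurd hR (by simp [Rest]; omega)
  | cons N L ih =>
    intro t I hR k h1 h2
    obtain ⟨_, _, h3, _, h5⟩ := hR
    by_cases hN : k ≤ N.2
    · exact ⟨N, List.mem_cons_self, by omega, hN⟩
    · obtain ⟨J, hJ, hJ'⟩ := ih _ _ h5 k (by omega) h2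
      exact ⟨J, List.mem_cons_of_mem _ hJ, hJ'⟩

/-- Monotonicity of the interval graph under set inclusion, at the level of reachability. -/
def inclHom {S T : Set (ℤ × ℤ)} (hST : S ⊆ T) : intervalGraph S →g intervalGraph T where
  toFun v := ⟨v.1, hST v.2⟩
  map_rel' := by
    intro u v h
    rw [intervalGraph, SimpleGraph.fromRel_adj] at h ⊢
    refine ⟨fun he => h.1 ?_, h.2⟩
    have h2 := congrArg Subtype.val he
    exact Subtype.ext h2

lemma reach_mono {S T : Set (ℤ × ℤ)} (hST : S ⊆ T) {x y : ℤ × ℤ} (hx : x ∈ S) (hy : y ∈ S)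
    (h : (intervalGraph S).Reachable ⟨x, hx⟩ ⟨y, hy⟩) :
    (intervalGraph T).Reachable ⟨x, hST hx⟩ ⟨y, hST hy⟩ :=
  h.map (inclHom hST)

lemma rest_reach (L : List (ℤ × ℤ)) : ∀ (t : ℤ) (I : ℤ × ℤ), Rest ℐ b t I L →
    I.1 ≤ I.2 → (∀ J ∈ L, J.1 ≤ J.2) →
    ∀ x (hx : x ∈ I :: L),
      (intervalGraph {y | y ∈ I :: L}).Reachable ⟨x, hx⟩ ⟨I, (List.mem_cons_self : I ∈ I :: L)⟩ := by
  induction L with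
  | nil =>
    intro t I _ _ _ x hx
    have : x = I := by simpa using hx
    subst this
    exact SimpleGraph.Reachable.refl _
  | cons N L ih =>
    intro t I hR hI hL x hx
    obtain ⟨h1, h2, h3, h4, h5⟩ := hR
    rcases List.mem_cons.1 hx with h | h
    · subst h; exact SimpleGraph.Reachable.refl _
    · have hsub : {y : ℤ × ℤ | y ∈ N :: L} ⊆ {y : ℤ × ℤ | y ∈ I :: N :: L} :=
        fun y hy => List.mem_cons_of_mem _ hy
      have hr0 : (intervalGraph {y | y ∈ N :: L}).Reachable ⟨x, h⟩
          ⟨N, (List.mem_cons_self : N ∈ N :: L)⟩ :=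
        ih _ _ h5 (hL N (List.mem_cons_self))
          (fun J hJ => hL J (List.mem_cons_of_mem _ hJ)) x h
      have hr1 : (intervalGraph {y | y ∈ I :: N :: L}).Reachable ⟨x, hx⟩
          ⟨N, List.mem_cons_of_mem _ (List.mem_cons_self)⟩ :=
        reach_mono hsub h ((List.mem_cons_self : N ∈ N :: L)) hr0
      have hadj : (intervalGraph {y | y ∈ I :: N :: L}).Adj
          ⟨N, List.mem_cons_of_mem _ (List.mem_cons_self)⟩
          ⟨I, List.mem_cons_self⟩ := by
        rw [intervalGraph, SimpleGraph.fromRel_adj]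
        refine ⟨fun he => ?_, Or.inl ⟨I.2, by
          simp only [Set.mem_inter_iff, Set.mem_Icc]
          exact ⟨⟨h3, h4.le⟩, hI, le_refl _⟩⟩⟩
        have hNI : N = I := congrArg Subtype.val he
        rw [hNI] at h4
        exact lt_irrefl _ h4
      exact hr1.trans hadj.reachable

/-- The cut lemma: walking from an interval with right endpoint `≤ c` to one with
right endpoint `> c`, some interval crosses `c`. -/
lemma cut_walk {c : ℤ} : ∀ {u v : ℐ}, (intervalGraph ℐ).Walk u v →
    u.1.2 ≤ c → c < v.1.2 → ∃ J ∈ ℐ, J.1 ≤ c ∧ c < J.2 := by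
  intro u v p
  induction p with
  | nil => intro h1 h2; omega
  | @cons u w v h p ih =>
    intro h1 h2
    by_cases hw : w.1.2 ≤ c
    · exact ih hw h2
    · push_neg at hw
      rw [intervalGraph, SimpleGraph.fromRel_adj] at h
      obtain ⟨x, hx1, hx2⟩ : (Set.Icc u.1.1 u.1.2 ∩ Set.Icc w.1.1 w.1.2).Nonempty := by
        rcases h.2 with h' | h'
        · exact h'
        · obtain ⟨x, hx⟩ := h'
          exact ⟨x, hx.2, hx.1⟩
      simp only [Set.mem_Icc] at hx1 hx2
      exact ⟨w.1, w.2, by omega, hw⟩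

lemma cut (hconn : (intervalGraph ℐ).Connected) {I : ℤ × ℤ} (hI : I ∈ ℐ) (hIb : I.2 < b)
    (hbK : ∃ K ∈ ℐ, b ≤ K.2) : ∃ J ∈ ℐ, J.1 ≤ I.2 ∧ I.2 < J.2 := by
  obtain ⟨K, hK, hKb⟩ := hbK
  obtain ⟨p⟩ := hconn.preconnected ⟨I, hI⟩ ⟨K, hK⟩
  exact cut_walk p (le_refl _) (lt_of_lt_of_le hIb hKb)

/-- The main construction: extend the chain until `b` is reached. -/
lemma build : ∀ (n : ℕ) (t : ℤ) (I : ℤ × ℤ), I ∈ ℐ → t ≤ I.2 →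
    (∀ J ∈ ℐ, J.1 ≤ t → J.2 ≤ I.2) → (b - I.2).toNat ≤ n →
    (intervalGraph ℐ).Connected → (∃ K ∈ ℐ, b ≤ K.2) → (∀ J ∈ ℐ, J.2 ≤ b) →
    ∃ L, Rest ℐ b t I L := by
  intro n
  induction n with
  | zero =>
    intro t I _ _ _ hn _ _ _
    exact ⟨[], show b ≤ I.2 by omega⟩
  | succ n ih =>
    intro t I hI ht hmax hn hconn hbK hright
    by_cases hb2 : b ≤ I.2
    · exact ⟨[], hb2⟩
    · push_neg at hb2
      have hP : ∃ r : ℤ, ∃ J, J ∈ ℐ ∧ J.1 ≤ I.2 ∧ I.2 < J.2 ∧ J.2 = r := by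
        obtain ⟨J, hJ, h1, h2⟩ := cut hconn hI hb2 hbK
        exact ⟨J.2, J, hJ, h1, h2, rfl⟩
      have hbdd : ∃ c : ℤ, ∀ r : ℤ, (∃ J, J ∈ ℐ ∧ J.1 ≤ I.2 ∧ I.2 < J.2 ∧ J.2 = r) → r ≤ c :=
        ⟨b, fun r ⟨J, hJ, _, _, hr⟩ => hr ▸ hright J hJ⟩
      obtain ⟨r₀, ⟨J, hJ, hJ1, hJ2, hJr⟩, hmax'⟩ := Int.exists_greatest_of_bdd hbdd hP
      subst hJr
      have hnew : ∀ K ∈ ℐ, K.1 ≤ I.2 → K.2 ≤ J.2 := by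
        intro K hK hK1
        by_cases h : K.2 ≤ I.2
        · omega
        · exact hmax' K.2 ⟨K, hK, hK1, by omega, rfl⟩
      obtain ⟨L, hL⟩ := ih I.2 J hJ hJ2.le hnew (by omega) hconn hbK hright
      refine ⟨J :: L, hJ, ?_, hJ1, hJ2, hL⟩
      by_contra h
      push_neg at h
      have := hmax J hJ h
      omega

end IGAux


/-- If `ℐ` is a nonempty connected family of discrete intervals contained in
`[a,b]`, with `a` and `b` each covered by some member of `ℐ`, then there is a subset
`ℐ' ⊆ ℐ` whose interval graph is connected and such that every integer of `[a,b]` is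
contained in exactly one or exactly two members of `ℐ'`. -/
theorem exists_connected_subfamily_cover_once_or_twice
    (a b : ℤ) (hab : a ≤ b) (ℐ : Set (ℤ × ℤ)) (hne : ℐ.Nonempty)
    (hproper : ∀ I ∈ ℐ, I.1 ≤ I.2)
    (hsub : ∀ I ∈ ℐ, Set.Icc I.1 I.2 ⊆ Set.Icc a b)
    (hconn : (intervalGraph ℐ).Connected)
    (ha : ∃ I ∈ ℐ, a ∈ Set.Icc I.1 I.2)
    (hb : ∃ I ∈ ℐ, b ∈ Set.Icc I.1 I.2) :
    ∃ ℐ' ⊆ ℐ, (intervalGraph ℐ').Connected ∧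
      ∀ k ∈ Set.Icc a b,
        (∃ I ∈ ℐ', k ∈ Set.Icc I.1 I.2) ∧
        (∀ I ∈ ℐ', ∀ J ∈ ℐ', ∀ K ∈ ℐ',
          k ∈ Set.Icc I.1 I.2 → k ∈ Set.Icc J.1 J.2 → k ∈ Set.Icc K.1 K.2 →
          I = J ∨ I = K ∨ J = K) := by
  -- basic facts
  have hleft : ∀ J ∈ ℐ, a ≤ J.1 := fun J hJ =>
    (Set.mem_Icc.1 (hsub J hJ (Set.mem_Icc.2 ⟨le_refl _, hproper J hJ⟩))).1
  have hright : ∀ J ∈ ℐ, J.2 ≤ b := fun J hJ =>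
    (Set.mem_Icc.1 (hsub J hJ (Set.mem_Icc.2 ⟨hproper J hJ, le_refl _⟩))).2
  obtain ⟨Ia, hIaℐ, hIa⟩ := ha
  rw [Set.mem_Icc] at hIa
  -- choose the initial interval: containing a, maximal right endpoint
  have hbdd : ∃ c : ℤ, ∀ r : ℤ, (∃ J, J ∈ ℐ ∧ J.1 ≤ a ∧ J.2 = r) → r ≤ c :=
    ⟨b, fun r ⟨J, hJ, _, hr⟩ => hr ▸ hright J hJ⟩
  obtain ⟨r₀, ⟨I₀, hI₀, hI₀a, hI₀r⟩, hmax⟩ :=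
    Int.exists_greatest_of_bdd hbdd ⟨Ia.2, Ia, hIaℐ, hIa.1, rfl⟩
  subst hI₀r
  have hI₀a' : I₀.1 = a := le_antisymm hI₀a (hleft I₀ hI₀)
  have haI₀ : a ≤ I₀.2 := hI₀a' ▸ hproper I₀ hI₀
  have hmax' : ∀ J ∈ ℐ, J.1 ≤ a → J.2 ≤ I₀.2 := fun J hJ h => hmax J.2 ⟨J, hJ, h, rfl⟩
  have hbK : ∃ K ∈ ℐ, b ≤ K.2 := by
    obtain ⟨K, hK, hKb⟩ := hb
    rw [Set.mem_Icc] at hKb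
    exact ⟨K, hK, hKb.2⟩
  obtain ⟨L, hL⟩ := IGAux.build (b - I₀.2).toNat a I₀ hI₀ haI₀ hmax' (le_refl _)
    hconn hbK hright
  refine ⟨{x | x ∈ I₀ :: L}, ?_, ?_, ?_⟩
  · intro x hx
    rcases List.mem_cons.1 hx with h | h
    · exact h ▸ hI₀
    · exact IGAux.rest_mem L a I₀ hL x h
  · rw [SimpleGraph.connected_iff]
    refine ⟨?_, ⟨⟨I₀, List.mem_cons_self⟩⟩⟩
    · intro u v
      have hu := IGAux.rest_reach L a I₀ hL (hproper I₀ hI₀)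
        (fun J hJ => hproper J (IGAux.rest_mem L a I₀ hL J hJ)) u.1 u.2
      have hv := IGAux.rest_reach L a I₀ hL (hproper I₀ hI₀)
        (fun J hJ => hproper J (IGAux.rest_mem L a I₀ hL J hJ)) v.1 v.2
      exact hu.trans hv.symm
  · intro k hk
    rw [Set.mem_Icc] at hk
    constructor
    · by_cases hkI : k ≤ I₀.2
      · exact ⟨I₀, List.mem_cons_self, Set.mem_Icc.2 ⟨by omega, hkI⟩⟩
      · obtain ⟨J, hJ, h1, h2⟩ := IGAux.rest_cover L a I₀ hL k (by omega) hk.2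
        exact ⟨J, List.mem_cons_of_mem _ hJ, Set.mem_Icc.2 ⟨h1, h2⟩⟩
    · intro I hI J hJ K hK hkI hkJ hkK
      rw [Set.mem_Icc] at hkI hkJ hkK
      exact IGAux.rest_three L a I₀ hL k I J K hI hJ hK
        hkI.1 hkI.2 hkJ.1 hkJ.2 hkK.1 hkK.2
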